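/- Consider the deterministic linear system x_{t+1} = A x_t + B u_t with x_0 = 0, where there exist τ ≥ 1 and ρ ∈ (0,1) with ‖Aᵏ‖_op ≤ τ ρᵏ for all k. If Σ_{t=0}^{T−1} u_tᵀ u_t ≤ T γ², then Σ_{t=1}^{T} ‖x_t‖₂² ≤ 4 τ² ‖B‖_op² γ² T / (1 − ρ)². -/

import Mathlib

/-- The ℓ₂ → ℓ₂ operator (spectral) norm of a matrix. -/
noncomputable def opNorm {𝕜 : Type*} [RCLike 𝕜] {m n : Type*} [Fintype m] [Fintype n]
    [DecidableEq n] (M : Matrix m n 𝕜) : ℝ :=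
  ‖(Matrix.toEuclideanLin M).toContinuousLinearMap‖

lemma norm_mulVec_le' {m n : ℕ} (M : Matrix (Fin m) (Fin n) ℝ) (v : Fin n → ℝ) :
    ‖(WithLp.equiv 2 (Fin m → ℝ)).symm (M.mulVec v)‖
      ≤ opNorm M * ‖(WithLp.equiv 2 (Fin n → ℝ)).symm v‖ := by
  have h := (Matrix.toEuclideanLin M).toContinuousLinearMap.le_opNorm
    ((WithLp.equiv 2 (Fin n → ℝ)).symm v)
  simpa [opNorm] using h

lemma sq_norm_eq' {n : ℕ} (v : Fin n → ℝ) :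
    ‖(WithLp.equiv 2 (Fin n → ℝ)).symm v‖ ^ 2 = ∑ i, (v i) ^ 2 := by
  rw [EuclideanSpace.norm_eq, Real.sq_sqrt (by positivity)]
  simp [sq_abs]

/-- for the deterministic linear system `x_{t+1} = A x_t + B u_t`, `x₀ = 0`,
with `‖Aᵏ‖_op ≤ τ ρᵏ` (τ ≥ 1, ρ ∈ (0,1)) and input energy `Σ_{t<T} ‖u_t‖² ≤ T γ²`, one has
`Σ_{t=1}^T ‖x_t‖₂² ≤ 4 τ² ‖B‖_op² γ² T / (1 − ρ)²`. -/
theorem input_energy_state_bound {d p : ℕ}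
    (A : Matrix (Fin d) (Fin d) ℝ) (B : Matrix (Fin d) (Fin p) ℝ)
    (u : ℕ → Fin p → ℝ) (x : ℕ → Fin d → ℝ)
    (τ ρ γ : ℝ) (hτ : 1 ≤ τ) (hρ0 : 0 < ρ) (hρ1 : ρ < 1)
    (hA : ∀ k : ℕ, opNorm (A ^ k) ≤ τ * ρ ^ k)
    (hx0 : x 0 = 0)
    (hxrec : ∀ t, x (t + 1) = A.mulVec (x t) + B.mulVec (u t))
    (T : ℕ)
    (hu : ∑ t ∈ Finset.range T, ∑ i, (u t i) ^ 2 ≤ (T : ℝ) * γ ^ 2) :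
    ∑ t ∈ Finset.Icc 1 T, ∑ i, (x t i) ^ 2
      ≤ 4 * τ ^ 2 * (opNorm B) ^ 2 * γ ^ 2 * T / (1 - ρ) ^ 2 := by
  have h1ρ : (0:ℝ) < 1 - ρ := by linarith
  set nB := opNorm B with hnBdef
  have hnB0 : 0 ≤ nB := norm_nonneg _
  have hτ0 : (0:ℝ) < τ := by linarith
  set a : ℕ → ℝ := fun s => ‖(WithLp.equiv 2 (Fin p → ℝ)).symm (u s)‖ with hadef
  have ha0 : ∀ s, 0 ≤ a s := fun s => norm_nonneg _
  -- geometric sum bound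
  have hgeom : ∀ n : ℕ, ∑ k ∈ Finset.range n, ρ ^ k ≤ 1 / (1 - ρ) := by
    intro n
    rw [geom_sum_eq hρ1.ne]
    have heq : (ρ ^ n - 1) / (ρ - 1) = (1 - ρ ^ n) / (1 - ρ) := by
      rw [div_eq_div_iff (by linarith) (by linarith)]; ring
    rw [heq]
    have : (0:ℝ) ≤ ρ ^ n := pow_nonneg hρ0.le n
    exact div_le_div₀ zero_le_one (by linarith) h1ρ le_rfl
  -- solution formula
  have hform : ∀ t, x t = ∑ s ∈ Finset.range t,
      (A ^ (t - 1 - s)).mulVec (B.mulVec (u s)) := by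
    intro t
    induction t with
    | zero => simpa using hx0
    | succ t ih =>
      rw [hxrec t, ih]
      have hmv := map_sum (Matrix.mulVecLin A)
        (fun s => (A ^ (t - 1 - s)).mulVec (B.mulVec (u s))) (Finset.range t)
      simp only [Matrix.mulVecLin_apply] at hmv
      rw [hmv, Finset.sum_range_succ]
      congr 1
      · apply Finset.sum_congr rfl
        intro s hs
        rw [Finset.mem_range] at hs
        have h : t + 1 - 1 - s = (t - 1 - s) + 1 := by omega
        rw [Matrix.mulVec_mulVec, h, pow_succ']
      · have h : t + 1 - 1 - t = 0 := by omega
        rw [h, pow_zero, Matrix.one_mulVec]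
  -- norm bound on states
  have hxb : ∀ t, ‖(WithLp.equiv 2 (Fin d → ℝ)).symm (x t)‖
      ≤ τ * nB * ∑ s ∈ Finset.range t, ρ ^ (t - 1 - s) * a s := by
    intro t
    rw [hform t]
    have hsum : (WithLp.equiv 2 (Fin d → ℝ)).symm
        (∑ s ∈ Finset.range t, (A ^ (t - 1 - s)).mulVec (B.mulVec (u s)))
        = ∑ s ∈ Finset.range t,
          (WithLp.equiv 2 (Fin d → ℝ)).symm ((A ^ (t - 1 - s)).mulVec (B.mulVec (u s))) :=
          WithLp.toLp_sum 2 _ _ _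
    rw [hsum]
    calc ‖∑ s ∈ Finset.range t,
          (WithLp.equiv 2 (Fin d → ℝ)).symm ((A ^ (t - 1 - s)).mulVec (B.mulVec (u s)))‖
        ≤ ∑ s ∈ Finset.range t,
          ‖(WithLp.equiv 2 (Fin d → ℝ)).symm ((A ^ (t - 1 - s)).mulVec (B.mulVec (u s)))‖ :=
          norm_sum_le _ _
      _ ≤ ∑ s ∈ Finset.range t, (τ * ρ ^ (t - 1 - s)) * (nB * a s) := by
          apply Finset.sum_le_sum
          intro s _
          refine (norm_mulVec_le' _ _).trans ?_
          exact mul_le_mul (hA _) (norm_mulVec_le' _ _) (norm_nonneg _)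
            (by positivity)
      _ = τ * nB * ∑ s ∈ Finset.range t, ρ ^ (t - 1 - s) * a s := by
          rw [Finset.mul_sum]; apply Finset.sum_congr rfl; intro s _; ring
  -- Cauchy-Schwarz per time step
  have hCS : ∀ t, (∑ s ∈ Finset.range t, ρ ^ (t - 1 - s) * a s) ^ 2
      ≤ (1 / (1 - ρ)) * ∑ s ∈ Finset.range t, ρ ^ (t - 1 - s) * a s ^ 2 := by
    intro t
    have cs := Finset.sum_mul_sq_le_sq_mul_sq (Finset.range t)
      (fun s => Real.sqrt (ρ ^ (t - 1 - s)))
      (fun s => Real.sqrt (ρ ^ (t - 1 - s)) * a s)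
    have h1 : ∀ s, Real.sqrt (ρ ^ (t - 1 - s)) * (Real.sqrt (ρ ^ (t - 1 - s)) * a s)
        = ρ ^ (t - 1 - s) * a s := by
      intro s; rw [← mul_assoc, Real.mul_self_sqrt (by positivity)]
    have h2 : ∀ s, (Real.sqrt (ρ ^ (t - 1 - s))) ^ 2 = ρ ^ (t - 1 - s) := by
      intro s; exact Real.sq_sqrt (by positivity)
    have h3 : ∀ s, (Real.sqrt (ρ ^ (t - 1 - s)) * a s) ^ 2 = ρ ^ (t - 1 - s) * a s ^ 2 := by
      intro s; rw [mul_pow, h2]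
    simp only [h1, h2, h3] at cs
    refine cs.trans ?_
    have hrefl : ∑ s ∈ Finset.range t, ρ ^ (t - 1 - s) = ∑ k ∈ Finset.range t, ρ ^ k :=
      Finset.sum_range_reflect (fun k => ρ ^ k) t
    have hpos : (0:ℝ) ≤ ∑ s ∈ Finset.range t, ρ ^ (t - 1 - s) * a s ^ 2 := by
      apply Finset.sum_nonneg; intro s _; positivity
    apply mul_le_mul_of_nonneg_right _ hpos
    rw [hrefl]; exact hgeom t
  -- rewrite LHS
  have hL : ∑ t ∈ Finset.Icc 1 T, ∑ i, (x t i) ^ 2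
      = ∑ r ∈ Finset.range T, ‖(WithLp.equiv 2 (Fin d → ℝ)).symm (x (1 + r))‖ ^ 2 := by
    rw [← Finset.Ico_add_one_right_eq_Icc, Finset.sum_Ico_eq_sum_range]
    apply Finset.sum_congr rfl
    intro r _
    rw [sq_norm_eq']
  rw [hL]
  -- per-step squared bound
  have hstep : ∀ r, ‖(WithLp.equiv 2 (Fin d → ℝ)).symm (x (1 + r))‖ ^ 2
      ≤ τ ^ 2 * nB ^ 2 * (1 / (1 - ρ)) *
        ∑ s ∈ Finset.range (r + 1), ρ ^ (r - s) * a s ^ 2 := by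
    intro r
    have hb := hxb (1 + r)
    have hb0 : (0:ℝ) ≤ ∑ s ∈ Finset.range (1 + r), ρ ^ (1 + r - 1 - s) * a s := by
      apply Finset.sum_nonneg; intro s _; positivity
    have := pow_le_pow_left₀ (norm_nonneg _) hb 2
    refine this.trans ?_
    rw [mul_pow, mul_pow]
    have hcs := hCS (1 + r)
    have hh1 : ∑ s ∈ Finset.range (1 + r), ρ ^ (1 + r - 1 - s) * a s
        = ∑ s ∈ Finset.range (r + 1), ρ ^ (r - s) * a s := by
      rw [add_comm 1 r]
      exact Finset.sum_congr rfl fun s _ => by rw [show r + 1 - 1 - s = r - s by omega]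
    have hh2 : ∑ s ∈ Finset.range (1 + r), ρ ^ (1 + r - 1 - s) * a s ^ 2
        = ∑ s ∈ Finset.range (r + 1), ρ ^ (r - s) * a s ^ 2 := by
      rw [add_comm 1 r]
      exact Finset.sum_congr rfl fun s _ => by rw [show r + 1 - 1 - s = r - s by omega]
    rw [hh1, hh2] at hcs
    rw [hh1]
    calc τ ^ 2 * nB ^ 2 * (∑ s ∈ Finset.range (r + 1), ρ ^ (r - s) * a s) ^ 2
        ≤ τ ^ 2 * nB ^ 2 * ((1 / (1 - ρ)) * ∑ s ∈ Finset.range (r + 1), ρ ^ (r - s) * a s ^ 2) :=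
          by apply mul_le_mul_of_nonneg_left hcs (by positivity)
      _ = τ ^ 2 * nB ^ 2 * (1 / (1 - ρ)) *
            ∑ s ∈ Finset.range (r + 1), ρ ^ (r - s) * a s ^ 2 := by ring
  -- swap double sum
  have hswap : ∑ r ∈ Finset.range T, ∑ s ∈ Finset.range (r + 1), ρ ^ (r - s) * a s ^ 2
      ≤ (1 / (1 - ρ)) * ∑ s ∈ Finset.range T, a s ^ 2 := by
    have hexp : ∀ r ∈ Finset.range T,
        ∑ s ∈ Finset.range (r + 1), ρ ^ (r - s) * a s ^ 2
        = ∑ s ∈ Finset.range T, (if s ≤ r then ρ ^ (r - s) * a s ^ 2 else 0) := by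
      intro r hr
      rw [Finset.mem_range] at hr
      have hsub : Finset.range (r + 1) ⊆ Finset.range T := Finset.range_subset_range.mpr (by omega)
      have h0 : ∀ s ∈ Finset.range T, s ∉ Finset.range (r + 1) →
          (if s ≤ r then ρ ^ (r - s) * a s ^ 2 else 0) = 0 := by
        intro s _ hs
        rw [Finset.mem_range, not_lt] at hs
        rw [if_neg (by omega)]
      rw [← Finset.sum_subset hsub h0]
      apply Finset.sum_congr rfl
      intro s hs
      rw [Finset.mem_range] at hs
      rw [if_pos (by omega)]
    rw [Finset.sum_congr rfl hexp, Finset.sum_comm]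
    have hinner : ∀ s ∈ Finset.range T,
        ∑ r ∈ Finset.range T, (if s ≤ r then ρ ^ (r - s) * a s ^ 2 else 0)
        ≤ (1 / (1 - ρ)) * a s ^ 2 := by
      intro s _
      have heq : ∑ r ∈ Finset.range T, (if s ≤ r then ρ ^ (r - s) * a s ^ 2 else 0)
          = (∑ r ∈ Finset.range T, (if s ≤ r then ρ ^ (r - s) else 0)) * a s ^ 2 := by
        rw [Finset.sum_mul]
        apply Finset.sum_congr rfl
        intro r _
        split <;> simp
      rw [heq]
      apply mul_le_mul_of_nonneg_right _ (by positivity)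
      have hfil : ∑ r ∈ Finset.range T, (if s ≤ r then ρ ^ (r - s) else 0)
          = ∑ r ∈ Finset.Ico s T, ρ ^ (r - s) := by
        rw [← Finset.sum_filter]
        apply Finset.sum_congr _ (fun _ _ => rfl)
        ext r
        simp [Finset.mem_filter, Finset.mem_Ico, and_comm]
      rw [hfil, Finset.sum_Ico_eq_sum_range]
      have : ∀ k, ρ ^ (s + k - s) = ρ ^ k := by intro k; congr 1; omega
      simp only [this]
      exact hgeom _
    calc ∑ s ∈ Finset.range T, ∑ r ∈ Finset.range T,
          (if s ≤ r then ρ ^ (r - s) * a s ^ 2 else 0)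
        ≤ ∑ s ∈ Finset.range T, (1 / (1 - ρ)) * a s ^ 2 := Finset.sum_le_sum hinner
      _ = (1 / (1 - ρ)) * ∑ s ∈ Finset.range T, a s ^ 2 := by rw [Finset.mul_sum]
  -- input energy
  have hua : ∑ s ∈ Finset.range T, a s ^ 2 ≤ (T : ℝ) * γ ^ 2 := by
    refine le_of_eq_of_le ?_ hu
    apply Finset.sum_congr rfl
    intro s _
    exact sq_norm_eq' (u s)
  have hTγ : (0:ℝ) ≤ (T : ℝ) * γ ^ 2 := by
    refine le_trans ?_ hu
    apply Finset.sum_nonneg; intro t _; positivity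
  -- combine
  have hC0 : (0:ℝ) ≤ τ ^ 2 * nB ^ 2 * (1 / (1 - ρ)) := by positivity
  calc ∑ r ∈ Finset.range T, ‖(WithLp.equiv 2 (Fin d → ℝ)).symm (x (1 + r))‖ ^ 2
      ≤ ∑ r ∈ Finset.range T, τ ^ 2 * nB ^ 2 * (1 / (1 - ρ)) *
          ∑ s ∈ Finset.range (r + 1), ρ ^ (r - s) * a s ^ 2 :=
        Finset.sum_le_sum (fun r _ => hstep r)
    _ = τ ^ 2 * nB ^ 2 * (1 / (1 - ρ)) *
          ∑ r ∈ Finset.range T, ∑ s ∈ Finset.range (r + 1), ρ ^ (r - s) * a s ^ 2 := by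
        rw [Finset.mul_sum]
    _ ≤ τ ^ 2 * nB ^ 2 * (1 / (1 - ρ)) * ((1 / (1 - ρ)) * ∑ s ∈ Finset.range T, a s ^ 2) := by
        apply mul_le_mul_of_nonneg_left hswap hC0
    _ ≤ τ ^ 2 * nB ^ 2 * (1 / (1 - ρ)) * ((1 / (1 - ρ)) * ((T : ℝ) * γ ^ 2)) := by
        apply mul_le_mul_of_nonneg_left _ hC0
        apply mul_le_mul_of_nonneg_left hua (by positivity)
    _ = τ ^ 2 * nB ^ 2 * γ ^ 2 * T / (1 - ρ) ^ 2 := by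
        field_simp
    _ ≤ 4 * τ ^ 2 * nB ^ 2 * γ ^ 2 * T / (1 - ρ) ^ 2 := by
        apply div_le_div_of_nonneg_right _ (by positivity)
        nlinarith [sq_nonneg τ, sq_nonneg nB, hTγ, sq_nonneg (τ * nB * γ), mul_nonneg (mul_nonneg (sq_nonneg τ) (sq_nonneg nB)) hTγ]
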